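/- Every Noetherian locally nilpotent group is nilpotent (and hence, being finitely generated nilpotent, is polycyclic). -/

import Mathlib

open scoped Pointwise

section Aux

variable {G : Type*} [Group G]

/-- If `A` is normal and `B = A ⊔ ⟨g⟩`, then `B / A` is cyclic. -/
lemma aux_cyclic_step (A B : Subgroup G) (hA : A.Normal) (g : G)
    (hB : B = A ⊔ Subgroup.closure {g}) :
    IsCyclic (B ⧸ A.subgroupOf B) := by
  have hgB : g ∈ B := by
    rw [hB]
    exact Subgroup.mem_sup_right (Subgroup.mem_closure_singleton.mpr ⟨1, zpow_one g⟩)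
  refine ⟨⟨QuotientGroup.mk ⟨g, hgB⟩, ?_⟩⟩
  intro x
  obtain ⟨⟨b, hb⟩, rfl⟩ := QuotientGroup.mk_surjective x
  have hb' : b ∈ (A : Set G) * (Subgroup.closure {g} : Set G) := by
    rw [← Subgroup.normal_mul]
    rw [hB] at hb
    exact hb
  obtain ⟨a, ha, w, hw, hmul⟩ := hb'
  obtain ⟨m, hm⟩ := Subgroup.mem_closure_singleton.mp hw
  refine ⟨m, ?_⟩
  show (QuotientGroup.mk (⟨g, hgB⟩ : B) : B ⧸ A.subgroupOf B) ^ m = QuotientGroup.mk ⟨b, hb⟩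
  have hgm : (⟨g, hgB⟩ : B) ^ m = ⟨g ^ m, zpow_mem hgB m⟩ := by
    ext; simp
  rw [← QuotientGroup.mk_zpow, hgm]
  rw [QuotientGroup.eq]
  have : (⟨g ^ m, zpow_mem hgB m⟩ : B)⁻¹ * ⟨b, hb⟩ = ⟨(g ^ m)⁻¹ * b, by
    exact mul_mem (inv_mem (zpow_mem hgB m)) hb⟩ := rfl
  rw [Subgroup.mem_subgroupOf, this]
  show (g ^ m)⁻¹ * b ∈ A
  have : (g ^ m)⁻¹ * b = (g ^ m)⁻¹ * a * ((g ^ m)⁻¹)⁻¹ := by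
    rw [← hmul, hm]; group
  rw [this]
  exact hA.conj_mem a ha _

/-- A subgroup between `A` and `B` is normal if `A` is normal and `[B,G] ≤ A`. -/
lemma aux_normal_of_between {A B K : Subgroup G} (hAK : A ≤ K) (hKB : K ≤ B)
    (hcomm : ∀ b ∈ B, ∀ y : G, b * y * b⁻¹ * y⁻¹ ∈ A) : K.Normal := by
  constructor
  intro n hn y
  have h1 : n * y * n⁻¹ * y⁻¹ ∈ A := hcomm n (hKB hn) y
  have h2 : y * n * y⁻¹ * n⁻¹ ∈ A := by
    have : y * n * y⁻¹ * n⁻¹ = (n * y * n⁻¹ * y⁻¹)⁻¹ := by group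
    rw [this]
    exact inv_mem h1
  have : y * n * y⁻¹ = (y * n * y⁻¹ * n⁻¹) * n := by group
  rw [this]
  exact mul_mem (hAK h2) hn

/-- Chain construction up to each term of the upper central series. -/
lemma aux_chain (hnoeth : ∀ H : Subgroup G, H.FG) (c : ℕ) :
    ∃ (N : ℕ) (f : ℕ → Subgroup G), f 0 = ⊥ ∧
      (∀ i, N ≤ i → f i = upperCentralSeries G c) ∧
      (∀ i, f i ≤ f (i + 1) ∧ (f i).Normal ∧
        ∃ g : G, f (i + 1) = f i ⊔ Subgroup.closure {g}) := by
  induction c with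
  | zero =>
    refine ⟨0, fun _ => ⊥, rfl, fun i _ => (upperCentralSeries_zero G).symm, fun i => ?_⟩
    refine ⟨le_refl _, inferInstance, 1, ?_⟩
    rw [Subgroup.closure_singleton_one, sup_bot_eq]
  | succ c ih =>
    obtain ⟨N, f, hf0, hfN, hstep⟩ := ih
    obtain ⟨S, hS⟩ := hnoeth (upperCentralSeries G (c + 1))
    set Z := upperCentralSeries G c with hZdef
    set Z' := upperCentralSeries G (c + 1) with hZ'def
    set l := S.toList with hldef
    have hZZ' : Z ≤ Z' := upperCentralSeries_mono G (Nat.le_succ c)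
    have hcomm : ∀ b ∈ Z', ∀ y : G, b * y * b⁻¹ * y⁻¹ ∈ Z := fun b hb y =>
      mem_upperCentralSeries_succ_iff.mp hb y
    -- the new chain
    set f' : ℕ → Subgroup G := fun i =>
      if i ≤ N then f i else Z ⊔ Subgroup.closure {x | x ∈ l.take (i - N)} with hf'def
    have hform : ∀ i, N ≤ i → f' i = Z ⊔ Subgroup.closure {x | x ∈ l.take (i - N)} := by
      intro i hi
      rcases Nat.lt_or_ge N i with h | h
      · simp only [hf'def, if_neg (Nat.not_le.mpr h)]
      · have hiN : i = N := le_antisymm (Nat.le_of_lt_succ (Nat.lt_succ_of_le h)) hi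
        subst hiN
        simp only [hf'def, if_pos (le_refl i), Nat.sub_self, List.take_zero]
        have : ({x | x ∈ ([] : List G)} : Set G) = ∅ := by
          ext x; simp
        rw [this, Subgroup.closure_empty, sup_bot_eq]
        exact hfN i (le_refl i)
    have hsubS : ∀ k, ({x | x ∈ l.take k} : Set G) ⊆ (S : Set G) := by
      intro k x hx
      have : x ∈ l := List.mem_of_mem_take hx
      rwa [hldef, Finset.mem_toList] at this
    have hle' : ∀ i, N ≤ i → f' i ≤ Z' := by
      intro i hi
      rw [hform i hi]
      refine sup_le hZZ' ?_
      calc Subgroup.closure {x | x ∈ l.take (i - N)}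
          ≤ Subgroup.closure (S : Set G) := Subgroup.closure_mono (hsubS _)
        _ = Z' := hS
    have hge' : ∀ i, N ≤ i → Z ≤ f' i := by
      intro i hi
      rw [hform i hi]; exact le_sup_left
    refine ⟨N + l.length + 1, f', ?_, ?_, ?_⟩
    · show f' 0 = ⊥
      simp only [hf'def, if_pos (Nat.zero_le N)]
      exact hf0
    · intro i hi
      have hNi : N ≤ i := le_trans (by omega) hi
      rw [hform i hNi]
      have htake : l.take (i - N) = l := List.take_of_length_le (by omega)
      rw [htake]
      have : ({x | x ∈ l} : Set G) = (S : Set G) := by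
        ext x; simp [hldef]
      rw [this, hS]
      exact sup_eq_right.mpr hZZ'
    · intro i
      rcases Nat.lt_or_ge i N with h | h
      · have h1 : i ≤ N := le_of_lt h
        have h2 : i + 1 ≤ N := h
        simp only [hf'def, if_pos h1, if_pos h2]
        exact hstep i
      · -- i ≥ N
        have hfi := hform i h
        have hfi1 := hform (i + 1) (le_trans h (Nat.le_succ i))
        have hk : i + 1 - N = (i - N) + 1 := by omega
        rw [hk] at hfi1
        set k := i - N with hkdef
        -- closure of take (k+1) = closure of take k ⊔ closure {g}
        have hsplit : ∃ g : G, Subgroup.closure {x | x ∈ l.take (k + 1)} =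
            Subgroup.closure {x | x ∈ l.take k} ⊔ Subgroup.closure {g} := by
          rcases Nat.lt_or_ge k l.length with hkl | hkl
          · refine ⟨l.get ⟨k, hkl⟩, ?_⟩
            have heq : l.take (k + 1) = l.take k ++ [l.get ⟨k, hkl⟩] := by
              rw [List.take_succ]
              simp [List.getElem?_eq_getElem hkl]
            have hset : ({x | x ∈ l.take (k + 1)} : Set G) =
                {x | x ∈ l.take k} ∪ {l.get ⟨k, hkl⟩} := by
              ext x
              simp only [heq, Set.mem_setOf_eq, List.mem_append, List.mem_singleton,
                Set.mem_union, Set.mem_singleton_iff, List.get_eq_getElem]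
            rw [hset, Subgroup.closure_union]
          · refine ⟨1, ?_⟩
            have h1 : l.take (k + 1) = l := List.take_of_length_le (by omega)
            have h2 : l.take k = l := List.take_of_length_le hkl
            rw [h1, h2, Subgroup.closure_singleton_one, sup_bot_eq]
        obtain ⟨g, hg⟩ := hsplit
        have hstep' : f' (i + 1) = f' i ⊔ Subgroup.closure {g} := by
          rw [hfi, hfi1, hg, sup_assoc]
        refine ⟨?_, ?_, g, hstep'⟩
        · rw [hstep']; exact le_sup_left
        · exact aux_normal_of_between (hge' i h) (hle' i h) hcomm

end Aux

/-- A group is polycyclic if it has a subnormal series with cyclic factors. -/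
def IsPolycyclic (G : Type*) [Group G] : Prop :=
  ∃ (n : ℕ) (f : Fin (n + 1) → Subgroup G),
    f 0 = ⊥ ∧ f (Fin.last n) = ⊤ ∧
    ∀ i : Fin n, f i.castSucc ≤ f i.succ ∧
      ∃ _ : ((f i.castSucc).subgroupOf (f i.succ)).Normal,
        IsCyclic ((f i.succ) ⧸ (f i.castSucc).subgroupOf (f i.succ))

/-- A Noetherian locally nilpotent group is nilpotent, hence polycyclic. -/
theorem noetherian_locally_nilpotent_is_nilpotent
    {G : Type*} [Group G] (hnoeth : ∀ H : Subgroup G, H.FG)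
    (hlocnilp : ∀ H : Subgroup G, H.FG → Group.IsNilpotent H) :
    Group.IsNilpotent G ∧ IsPolycyclic G := by
  have hnil : Group.IsNilpotent G := by
    have htop : Group.IsNilpotent (⊤ : Subgroup G) := hlocnilp ⊤ (hnoeth ⊤)
    exact @nilpotent_of_mulEquiv _ _ _ _ htop Subgroup.topEquiv
  refine ⟨hnil, ?_⟩
  obtain ⟨c, hc⟩ := hnil.nilpotent'
  obtain ⟨N, f, hf0, hfN, hstep⟩ := aux_chain hnoeth c
  refine ⟨N, fun i => f i.val, ?_, ?_, ?_⟩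
  · exact hf0
  · show f ((Fin.last N : Fin (N + 1)) : ℕ) = ⊤
    rw [Fin.val_last, hfN N (le_refl N)]
    exact hc
  · intro i
    obtain ⟨hle, hnorm, g, hg⟩ := hstep i.val
    exact ⟨hle, hnorm.subgroupOf _, aux_cyclic_step _ _ hnorm g hg⟩
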